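/- Let A, V ∈ ℝ^{d×d} with V commuting with Σ₀ ≻ 0 and with M := VA + AᵀVᵀ. If M ⪯ 0 (negative semidefinite), then Σ(t) = (Σ₀⁻¹ − tM)⁻¹ is defined for all t ≥ 0 and converges as t → +∞ to a positive semidefinite limit Σ* whose rank is at most the multiplicity of 0 as an eigenvalue of M; in particular λ_i(Σ*) = 0 for every index i with λ_i(M) < 0. -/

import Mathlib

open Matrix Filter

/-- If `V` commutes with `Σ₀ ≻ 0` and with `M := VA + AᵀVᵀ`, and `M ⪯ 0`, then
`Σ(t) = (Σ₀⁻¹ − t M)⁻¹` is defined for all `t ≥ 0` and converges entrywise, as `t → ∞`,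
to a positive semidefinite limit `Σ*` whose rank is at most the multiplicity of `0` as an
eigenvalue of `M` (equivalently, `rank Σ* + rank M ≤ d`). -/
theorem stmt_5 (d : ℕ) (A V S₀ : Matrix (Fin d) (Fin d) ℝ) (hS₀ : S₀.PosDef)
    (M : Matrix (Fin d) (Fin d) ℝ) (hM : M = V * A + (V * A)ᵀ)
    (hcomm₁ : V * S₀ = S₀ * V) (hcomm₂ : V * M = M * V)
    (hneg : (-M).PosSemidef) :
    (∀ t : ℝ, 0 ≤ t → IsUnit (S₀⁻¹ - t • M)) ∧
    ∃ Sstar : Matrix (Fin d) (Fin d) ℝ, Sstar.PosSemidef ∧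
      (∀ i j : Fin d,
        Tendsto (fun t : ℝ => ((S₀⁻¹ - t • M)⁻¹) i j) atTop (nhds (Sstar i j))) ∧
      Sstar.rank + M.rank ≤ d := by
  classical
  set N : Matrix (Fin d) (Fin d) ℝ := -M with hNdef
  have hNpsd : N.PosSemidef := hneg
  have hP : (S₀⁻¹).PosDef := hS₀.inv
  have hsmul : ∀ t : ℝ, 0 ≤ t → (t • N).PosSemidef := by
    intro t ht
    refine ⟨?_, ?_⟩
    · show (t • N)ᴴ = t • N
      rw [conjTranspose_smul, hNpsd.1.eq]
      simp
    · intro x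
      exact (hNpsd.smul ht).2 x
  have key0 : ∀ t : ℝ, S₀⁻¹ - t • M = S₀⁻¹ + t • N := by
    intro t
    rw [hNdef, smul_neg, sub_eq_add_neg]
  have hPD : ∀ t : ℝ, 0 ≤ t → (S₀⁻¹ - t • M).PosDef := by
    intro t ht
    rw [key0 t]
    exact hP.add_posSemidef (hsmul t ht)
  refine ⟨fun t ht => (hPD t ht).isUnit, ?_⟩
  -- square root of S₀
  set R : Matrix (Fin d) (Fin d) ℝ := (open MatrixOrder in CFC.sqrt S₀) with hRdefn
  have hRpsd : R.PosSemidef := open MatrixOrder in Matrix.nonneg_iff_posSemidef.mp (CFC.sqrt_nonneg S₀)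
  have hRR : R * R = S₀ := open MatrixOrder in CFC.sqrt_mul_sqrt_self S₀ hS₀.posSemidef.nonneg
  have hRdet : IsUnit R.det := by
    have h1 : R.det * R.det = S₀.det := by rw [← det_mul, hRR]
    have h2 : S₀.det ≠ 0 := hS₀.det_pos.ne'
    have : R.det ≠ 0 := by
      intro h; rw [h, mul_zero] at h1; exact h2 h1.symm
    exact this.isUnit
  have hRH : Rᴴ = R := hRpsd.1
  set Nt : Matrix (Fin d) (Fin d) ℝ := R * N * R with hNtdef
  have hNtpsd : Nt.PosSemidef := by
    have := hNpsd.mul_mul_conjTranspose_same R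
    rwa [hRH] at this
  set μ : Fin d → ℝ := hNtpsd.1.eigenvalues with hμdef
  set U : Matrix (Fin d) (Fin d) ℝ := (hNtpsd.1.eigenvectorUnitary : Matrix (Fin d) (Fin d) ℝ) with hUdef
  have hμnn : ∀ k, 0 ≤ μ k := hNtpsd.eigenvalues_nonneg
  have hspec : Nt = U * diagonal μ * star U := by
    simpa using hNtpsd.1.spectral_theorem
  have hU1 : U * star U = 1 :=
    (mem_unitaryGroup_iff).mp hNtpsd.1.eigenvectorUnitary.2
  have hU2 : star U * U = 1 :=
    (mem_unitaryGroup_iff').mp hNtpsd.1.eigenvectorUnitary.2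
  have hdetU : U.det * (star U).det = 1 := by
    have := congrArg det hU1
    rwa [det_mul, det_one] at this
  have hUdet : IsUnit U.det := IsUnit.of_mul_eq_one _ hdetU
  have hsUdet : IsUnit (star U).det :=
    IsUnit.of_mul_eq_one _ (by rwa [mul_comm] at hdetU)
  -- positive entries
  have hcpos : ∀ t : ℝ, 0 ≤ t → ∀ k, 0 < 1 + t * μ k := by
    intro t ht k
    have := mul_nonneg ht (hμnn k)
    linarith
  have keyE : ∀ t : ℝ,
      1 + t • Nt = U * diagonal (fun k => 1 + t * μ k) * star U := by
    intro t
    have hd : (diagonal (fun k => 1 + t * μ k) : Matrix (Fin d) (Fin d) ℝ)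
        = 1 + t • diagonal μ := by
      rw [← diagonal_one, ← diagonal_smul, ← diagonal_add]
      congr 1
    rw [hd, Matrix.mul_add, Matrix.add_mul, Matrix.mul_one, hU1,
      Matrix.mul_smul, Matrix.smul_mul, hspec]
  have hXinv : ∀ t : ℝ, 0 ≤ t →
      (U * diagonal (fun k => 1 + t * μ k) * star U) *
        (U * diagonal (fun k => (1 + t * μ k)⁻¹) * star U) = 1 := by
    intro t ht
    calc (U * diagonal (fun k => 1 + t * μ k) * star U) *
        (U * diagonal (fun k => (1 + t * μ k)⁻¹) * star U)
        = U * diagonal (fun k => 1 + t * μ k) * (star U * U) *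
            diagonal (fun k => (1 + t * μ k)⁻¹) * star U := by
          simp only [Matrix.mul_assoc]
      _ = U * (diagonal (fun k => 1 + t * μ k) *
            diagonal (fun k => (1 + t * μ k)⁻¹)) * star U := by
          rw [hU2, Matrix.mul_one]; simp only [Matrix.mul_assoc]
      _ = 1 := by
          rw [diagonal_mul_diagonal]
          have : (fun k => (1 + t * μ k) * (1 + t * μ k)⁻¹) = fun _ => (1:ℝ) := by
            funext k; exact mul_inv_cancel₀ (hcpos t ht k).ne'
          rw [this, diagonal_one, Matrix.mul_one, hU1]
  have hS₀inv : S₀⁻¹ = R⁻¹ * R⁻¹ := by rw [← hRR, Matrix.mul_inv_rev]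
  have hNc : R⁻¹ * Nt * R⁻¹ = N := by
    rw [hNtdef]
    calc R⁻¹ * (R * N * R) * R⁻¹ = (R⁻¹ * R) * N * (R * R⁻¹) := by
          simp only [Matrix.mul_assoc]
      _ = N := by rw [nonsing_inv_mul R hRdet, mul_nonsing_inv R hRdet,
            Matrix.one_mul, Matrix.mul_one]
  have hSigma : ∀ t : ℝ, S₀⁻¹ - t • M
      = R⁻¹ * (U * diagonal (fun k => 1 + t * μ k) * star U) * R⁻¹ := by
    intro t
    rw [← keyE t, key0 t, Matrix.mul_add, Matrix.add_mul, Matrix.mul_one,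
      Matrix.mul_smul, Matrix.smul_mul, hNc, hS₀inv]
  have hinv : ∀ t : ℝ, 0 ≤ t → (S₀⁻¹ - t • M)⁻¹
      = R * (U * diagonal (fun k => (1 + t * μ k)⁻¹) * star U) * R := by
    intro t ht
    apply inv_eq_right_inv
    rw [hSigma t]
    set X := U * diagonal (fun k => 1 + t * μ k) * star U with hX
    set Y := U * diagonal (fun k => (1 + t * μ k)⁻¹) * star U with hY
    calc R⁻¹ * X * R⁻¹ * (R * Y * R)
        = R⁻¹ * (X * ((R⁻¹ * R) * (Y * R))) := by simp only [Matrix.mul_assoc]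
      _ = R⁻¹ * (X * (Y * R)) := by rw [nonsing_inv_mul R hRdet, Matrix.one_mul]
      _ = R⁻¹ * ((X * Y) * R) := by simp only [Matrix.mul_assoc]
      _ = 1 := by rw [hXinv t ht, Matrix.one_mul, nonsing_inv_mul R hRdet]
  -- the limit
  set χ : Fin d → ℝ := fun k => if μ k = 0 then 1 else 0 with hχdef
  set Sstar : Matrix (Fin d) (Fin d) ℝ := R * (U * diagonal χ * star U) * R
    with hSstardef
  have hχnn : ∀ k, 0 ≤ χ k := by
    intro k; rw [hχdef]; dsimp only; split <;> norm_num
  have hχpsd : (diagonal χ).PosSemidef := posSemidef_diagonal_iff.mpr hχnn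
  have hSstarpsd : Sstar.PosSemidef := by
    have h1 : (U * diagonal χ * star U).PosSemidef := by
      have := hχpsd.mul_mul_conjTranspose_same U
      exact this
    have := h1.mul_mul_conjTranspose_same R
    rwa [hRH] at this
  refine ⟨Sstar, hSstarpsd, ?_, ?_⟩
  · -- entrywise convergence
    intro i j
    have hentry : ∀ (c : Fin d → ℝ),
        (R * (U * diagonal c * star U) * R) i j
          = ∑ k, (R * U) i k * (c k * ((star U * R) k j)) := by
      intro c
      have : R * (U * diagonal c * star U) * R
          = (R * U) * (diagonal c * (star U * R)) := by
        simp only [Matrix.mul_assoc]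
      rw [this, Matrix.mul_apply]
      congr 1
      funext k
      rw [diagonal_mul]
    have hlim : Tendsto
        (fun t : ℝ => ∑ k, (R * U) i k * ((1 + t * μ k)⁻¹ * ((star U * R) k j)))
        atTop (nhds (∑ k, (R * U) i k * (χ k * ((star U * R) k j)))) := by
      apply tendsto_finset_sum
      intro k _
      by_cases hk : μ k = 0
      · have : (fun t : ℝ => (R * U) i k * ((1 + t * μ k)⁻¹ * ((star U * R) k j)))
            = fun _ : ℝ => (R * U) i k * (χ k * ((star U * R) k j)) := by
          funext t; rw [hχdef]; simp [hk]
        rw [this]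
        exact tendsto_const_nhds
      · have hkpos : 0 < μ k := lt_of_le_of_ne (hμnn k) (Ne.symm hk)
        have h1 : Tendsto (fun t : ℝ => 1 + t * μ k) atTop atTop :=
          tendsto_atTop_add_const_left _ _ (Tendsto.atTop_mul_const hkpos tendsto_id)
        have h2 : Tendsto (fun t : ℝ => (1 + t * μ k)⁻¹) atTop (nhds 0) :=
          h1.inv_tendsto_atTop
        have h3 : Tendsto
            (fun t : ℝ => (R * U) i k * ((1 + t * μ k)⁻¹ * ((star U * R) k j)))
            atTop (nhds ((R * U) i k * (0 * ((star U * R) k j)))) :=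
          ((h2.mul_const _).const_mul _)
        have : χ k = 0 := by rw [hχdef]; simp [hk]
        rw [this]
        simpa using h3
    have heq : ∀ᶠ t : ℝ in atTop,
        (∑ k, (R * U) i k * ((1 + t * μ k)⁻¹ * ((star U * R) k j)))
          = ((S₀⁻¹ - t • M)⁻¹) i j := by
      filter_upwards [eventually_ge_atTop (0:ℝ)] with t ht
      rw [hinv t ht, hentry (fun k => (1 + t * μ k)⁻¹)]
    have : Sstar i j = ∑ k, (R * U) i k * (χ k * ((star U * R) k j)) := by
      rw [hSstardef, hentry χ]
    rw [this]
    exact hlim.congr' heq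
  · -- rank bound
    have hsURdet : IsUnit (star U * R).det := by
      rw [det_mul]; exact hsUdet.mul hRdet
    have hRUdet : IsUnit (R * U).det := by
      rw [det_mul]; exact hRdet.mul hUdet
    have hrs : Sstar.rank = Fintype.card {k // χ k ≠ 0} := by
      have h1 : Sstar = (R * U) * (diagonal χ * (star U * R)) := by
        rw [hSstardef]; simp only [Matrix.mul_assoc]
      rw [h1, rank_mul_eq_right_of_isUnit_det _ _ hRUdet,
        rank_mul_eq_left_of_isUnit_det _ _ hsURdet, rank_diagonal]
    have hrN : N.rank = Fintype.card {k // μ k ≠ 0} := by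
      have h2 : Nt.rank = N.rank := by
        rw [hNtdef, rank_mul_eq_left_of_isUnit_det _ _ hRdet,
          rank_mul_eq_right_of_isUnit_det _ _ hRdet]
      rw [← h2, hNtpsd.1.rank_eq_card_non_zero_eigs]
    have hrM : M.rank = N.rank := by
      have hMN : M = ((-1 : ℝ) • (1 : Matrix (Fin d) (Fin d) ℝ)) * N := by
        rw [Matrix.smul_mul, Matrix.one_mul, hNdef, neg_smul, one_smul, neg_neg]
      have hdet : IsUnit ((-1 : ℝ) • (1 : Matrix (Fin d) (Fin d) ℝ)).det := by
        have : ((-1 : ℝ) • (1 : Matrix (Fin d) (Fin d) ℝ)).det ≠ 0 := by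
          rw [det_smul, det_one, mul_one]
          exact pow_ne_zero _ (by norm_num)
        exact this.isUnit
      rw [hMN, rank_mul_eq_right_of_isUnit_det _ _ hdet]
    have hcard1 : Fintype.card {k // χ k ≠ 0} = Fintype.card {k // ¬ (μ k ≠ 0)} := by
      apply Fintype.card_congr
      apply Equiv.subtypeEquivRight
      intro k
      rw [hχdef]
      by_cases h : μ k = 0 <;> simp [h]
    have hcompl := Fintype.card_subtype_compl (fun k : Fin d => μ k ≠ 0)
    have hle := Fintype.card_subtype_le (fun k : Fin d => μ k ≠ 0)
    rw [hrs, hrM, hrN, hcard1, hcompl]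
    simp only [Fintype.card_fin] at *
    omega
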